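/- Let S be a set and π an equivalence relation on S. Then π has at most one equivalence class with more than one element if and only if π is an upper-modular element of the lattice of equivalence relations on S, i.e., for all equivalence relations ρ, σ on S with ρ ≤ π one has π ∧ (σ ∨ ρ) = (π ∧ σ) ∨ ρ. -/

import Mathlib

open Relation

theorem stmt_2 {S : Type*} (π : Setoid S) :
    (∀ a b c d : S, π.r a b → a ≠ b → π.r c d → c ≠ d → π.r a c) ↔
    (∀ ρ σ : Setoid S, ρ ≤ π → π ⊓ (σ ⊔ ρ) = (π ⊓ σ) ⊔ ρ) := by
  constructor
  · -- forward: at most one non-singleton class → upper modular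
    intro H ρ σ hρ
    apply le_antisymm
    · -- hard direction
      set T : Setoid S := (π ⊓ σ) ⊔ ρ with hT
      intro x y hxy
      obtain ⟨hπxy, hsup⟩ := Setoid.inf_iff_and.mp hxy
      rw [Setoid.sup_eq_eqvGen] at hsup
      -- key invariant
      have key : ∀ p q : S, EqvGen (fun u v => σ.r u v ∨ ρ.r u v) p q →
          σ.r p q ∨ ∃ u v : S, σ.r p u ∧ (∃ w, w ≠ u ∧ π.r u w) ∧
            T.r u v ∧ (∃ w, w ≠ v ∧ π.r v w) ∧ σ.r v q := by
        intro p q h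
        induction h with
        | rel p q h =>
          rcases h with h | h
          · exact Or.inl h
          · by_cases hpq : p = q
            · exact Or.inl (hpq ▸ σ.refl' p)
            · have hπpq : π.r p q := Setoid.le_def.mp hρ h
              refine Or.inr ⟨p, q, σ.refl' p, ⟨q, fun h' => hpq h'.symm, hπpq⟩,
                Setoid.le_def.mp le_sup_right h, ⟨p, hpq, π.symm' hπpq⟩, σ.refl' q⟩
        | refl p => exact Or.inl (σ.refl' p)
        | symm p q _ ih =>
          rcases ih with h | ⟨u, v, h1, h2, h3, h4, h5⟩
          · exact Or.inl (σ.symm' h)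
          · exact Or.inr ⟨v, u, σ.symm' h5, h4, T.symm' h3, h2, σ.symm' h1⟩
        | trans p m q _ _ ih1 ih2 =>
          rcases ih1 with h | ⟨u, v, h1, h2, h3, h4, h5⟩
          · rcases ih2 with h' | ⟨u', v', h1', h2', h3', h4', h5'⟩
            · exact Or.inl (σ.trans' h h')
            · exact Or.inr ⟨u', v', σ.trans' h h1', h2', h3', h4', h5'⟩
          · rcases ih2 with h' | ⟨u', v', h1', h2', h3', h4', h5'⟩
            · exact Or.inr ⟨u, v, h1, h2, h3, h4, σ.trans' h5 h'⟩
            · -- connect v and u' : both in the non-singleton class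
              obtain ⟨w, hw, hπvw⟩ := h4
              obtain ⟨w', hw', hπu'w'⟩ := h2'
              have hπvu' : π.r v u' := H v w u' w' hπvw (fun h => hw h.symm) hπu'w'
                (fun h => hw' h.symm)
              have hTvu' : T.r v u' :=
                Setoid.le_def.mp le_sup_left (Setoid.inf_iff_and.mpr ⟨hπvu', σ.trans' h5 h1'⟩)
              exact Or.inr ⟨u, v', h1, h2, T.trans' (T.trans' h3 hTvu') h3', h4', h5'⟩
      rcases key x y hsup with h | ⟨u, v, h1, h2, h3, h4, h5⟩
      · exact Setoid.le_def.mp le_sup_left (Setoid.inf_iff_and.mpr ⟨hπxy, h⟩)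
      · by_cases hxyeq : x = y
        · exact hxyeq ▸ T.refl' x
        · obtain ⟨w, hw, hπuw⟩ := h2
          obtain ⟨w', hw', hπvw'⟩ := h4
          have hπxu : π.r x u := H x y u w hπxy hxyeq hπuw (fun h => hw h.symm)
          have hπvy : π.r v y := by
            have : π.r y v := H y x v w' (π.symm' hπxy) (Ne.symm hxyeq) hπvw'
              (fun h => hw' h.symm)
            exact π.symm' this
          have t1 : T.r x u := Setoid.le_def.mp le_sup_left (Setoid.inf_iff_and.mpr ⟨hπxu, h1⟩)
          have t3 : T.r v y := Setoid.le_def.mp le_sup_left (Setoid.inf_iff_and.mpr ⟨hπvy, h5⟩)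
          exact T.trans' (T.trans' t1 h3) t3
    · exact sup_le (inf_le_inf_left π le_sup_left) (le_inf hρ le_sup_right)
  · -- converse
    intro H a b c d hab hne hcd hne'
    by_contra hac
    have hbc : ¬ π.r b c := fun h => hac (π.trans' hab h)
    have hda : ¬ π.r d a := fun h => hac (π.symm' (π.trans' hcd h))
    have hane : a ≠ c := fun h => hac (h ▸ π.refl' a)
    have hadne : a ≠ d := fun h => hac (h ▸ π.symm' hcd)
    have hbcne : b ≠ c := fun h => hbc (h ▸ π.refl' b)
    have hbdne : b ≠ d := fun h => hbc (h ▸ π.symm' hcd)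
    set ρ : Setoid S := EqvGen.setoid (fun x y => x = a ∧ y = b) with hρdef
    set σ : Setoid S := EqvGen.setoid (fun x y => (x = b ∧ y = c) ∨ (x = d ∧ y = a)) with hσdef
    have hρπ : ρ ≤ π := Setoid.eqvGen_le (fun x y ⟨hx, hy⟩ => hx ▸ hy ▸ hab)
    have heq := H ρ σ hρπ
    -- τ : only identifies a and b
    set τ : Setoid S := ⟨fun x y => x = y ∨ (x = a ∧ y = b) ∨ (x = b ∧ y = a),
      ⟨fun x => Or.inl rfl,
       fun {x y} h => by
        rcases h with rfl | ⟨rfl, rfl⟩ | ⟨rfl, rfl⟩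
        · exact Or.inl rfl
        · exact Or.inr (Or.inr ⟨rfl, rfl⟩)
        · exact Or.inr (Or.inl ⟨rfl, rfl⟩),
       fun {x y z} h1 h2 => by
        rcases h1 with rfl | ⟨rfl, rfl⟩ | ⟨rfl, rfl⟩
        · exact h2
        · rcases h2 with rfl | ⟨h, rfl⟩ | ⟨-, rfl⟩
          · exact Or.inr (Or.inl ⟨rfl, rfl⟩)
          · exact Or.inl h.symm
          · exact Or.inl rfl
        · rcases h2 with rfl | ⟨-, rfl⟩ | ⟨h, rfl⟩
          · exact Or.inr (Or.inr ⟨rfl, rfl⟩)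
          · exact Or.inl rfl
          · exact Or.inl h.symm⟩⟩
      with hτdef
    -- τ' : identifies b~c and d~a
    set τ' : Setoid S := ⟨fun x y => x = y ∨ (x = b ∧ y = c) ∨ (x = c ∧ y = b)
        ∨ (x = d ∧ y = a) ∨ (x = a ∧ y = d),
      ⟨fun x => Or.inl rfl,
       fun {x y} h => by
        rcases h with rfl | ⟨rfl, rfl⟩ | ⟨rfl, rfl⟩ | ⟨rfl, rfl⟩ | ⟨rfl, rfl⟩
        · exact Or.inl rfl
        · exact Or.inr (Or.inr (Or.inl ⟨rfl, rfl⟩))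
        · exact Or.inr (Or.inl ⟨rfl, rfl⟩)
        · exact Or.inr (Or.inr (Or.inr (Or.inr ⟨rfl, rfl⟩)))
        · exact Or.inr (Or.inr (Or.inr (Or.inl ⟨rfl, rfl⟩))),
       fun {x y z} h1 h2 => by
        rcases h1 with rfl | ⟨rfl, rfl⟩ | ⟨rfl, rfl⟩ | ⟨rfl, rfl⟩ | ⟨rfl, rfl⟩
        · exact h2
        · rcases h2 with rfl | ⟨h, -⟩ | ⟨-, rfl⟩ | ⟨h, -⟩ | ⟨h, -⟩
          · exact Or.inr (Or.inl ⟨rfl, rfl⟩)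
          · exact absurd h.symm hbcne
          · exact Or.inl rfl
          · exact absurd h hne'
          · exact absurd h.symm hane
        · rcases h2 with rfl | ⟨-, rfl⟩ | ⟨h, -⟩ | ⟨h, -⟩ | ⟨h, -⟩
          · exact Or.inr (Or.inr (Or.inl ⟨rfl, rfl⟩))
          · exact Or.inl rfl
          · exact absurd h hbcne
          · exact absurd h hbdne
          · exact absurd h.symm hne
        · rcases h2 with rfl | ⟨h, -⟩ | ⟨h, -⟩ | ⟨h, -⟩ | ⟨-, rfl⟩
          · exact Or.inr (Or.inr (Or.inr (Or.inl ⟨rfl, rfl⟩)))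
          · exact absurd h hne
          · exact absurd h hane
          · exact absurd h hadne
          · exact Or.inl rfl
        · rcases h2 with rfl | ⟨h, -⟩ | ⟨h, -⟩ | ⟨-, rfl⟩ | ⟨h, -⟩
          · exact Or.inr (Or.inr (Or.inr (Or.inr ⟨rfl, rfl⟩)))
          · exact absurd h.symm hbdne
          · exact absurd h.symm hne'
          · exact Or.inl rfl
          · exact absurd h.symm hadne⟩⟩
      with hτ'def
    have hστ' : σ ≤ τ' := Setoid.eqvGen_le (by
      rintro x y (⟨rfl, rfl⟩ | ⟨rfl, rfl⟩)
      · exact Or.inr (Or.inl ⟨rfl, rfl⟩)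
      · exact Or.inr (Or.inr (Or.inr (Or.inl ⟨rfl, rfl⟩))))
    have hle : (π ⊓ σ) ⊔ ρ ≤ τ := by
      apply sup_le
      · intro x y hxy
        obtain ⟨hπ', hσ'⟩ := Setoid.inf_iff_and.mp hxy
        have := Setoid.le_def.mp hστ' hσ'
        rcases this with rfl | ⟨rfl, rfl⟩ | ⟨rfl, rfl⟩ | ⟨rfl, rfl⟩ | ⟨rfl, rfl⟩
        · exact Or.inl rfl
        · exact absurd hπ' hbc
        · exact absurd (π.symm' hπ') hbc
        · exact absurd hπ' hda
        · exact absurd (π.symm' hπ') hda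
      · exact Setoid.eqvGen_le (fun x y ⟨hx, hy⟩ => Or.inr (Or.inl ⟨hx, hy⟩))
    have hmem : (π ⊓ (σ ⊔ ρ)).r c d := by
      refine Setoid.inf_iff_and.mpr ⟨hcd, ?_⟩
      have h1 : (σ ⊔ ρ).r c b := Setoid.le_def.mp le_sup_left
        (σ.symm' (EqvGen.rel _ _ (Or.inl ⟨rfl, rfl⟩)))
      have h2 : (σ ⊔ ρ).r b a := Setoid.le_def.mp le_sup_right
        (ρ.symm' (EqvGen.rel _ _ ⟨rfl, rfl⟩))
      have h3 : (σ ⊔ ρ).r a d := Setoid.le_def.mp le_sup_left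
        (σ.symm' (EqvGen.rel _ _ (Or.inr ⟨rfl, rfl⟩)))
      exact (σ ⊔ ρ).trans' ((σ ⊔ ρ).trans' h1 h2) h3
    rw [heq] at hmem
    have := Setoid.le_def.mp hle hmem
    rcases this with rfl | ⟨rfl, rfl⟩ | ⟨rfl, rfl⟩
    · exact hne' rfl
    · exact hane rfl
    · exact hbcne rfl
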